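/- Let T : [0,1]² → [0,1] be increasing in each argument. Then T is (jointly) continuous if and only if for all x₀, y₀ ∈ [0,1], the functions y ↦ T(x₀, y) and x ↦ T(x, y₀) are continuous. -/
import Mathlib


open unitInterval

theorem stmt_15 (T : I → I → I)
    (hmono : ∀ x x' y y', x ≤ x' → y ≤ y' → T x y ≤ T x' y') :
    Continuous (fun p : I × I => T p.1 p.2) ↔
      ∀ x₀ y₀ : I, Continuous (fun y => T x₀ y) ∧ Continuous (fun x => T x y₀) := by
  constructor
  · intro h x₀ y₀
    exact ⟨h.comp (continuous_const.prodMk continuous_id),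
      h.comp (continuous_id.prodMk continuous_const)⟩
  · intro h
    rw [Metric.continuous_iff]
    rintro ⟨x₀, y₀⟩ ε hε
    obtain ⟨δ₁, hδ₁, H₁⟩ := Metric.continuous_iff.mp (h x₀ y₀).2 x₀ (ε/3) (by linarith)
    have hx0 := x₀.2
    simp only [Set.mem_Icc] at hx0
    set x₁ : I := ⟨max (↑x₀ - δ₁/2) 0, by
      constructor
      · exact le_max_right _ _
      · exact max_le (by linarith [hx0.2]) zero_le_one⟩ with hx₁def
    set x₂ : I := ⟨min (↑x₀ + δ₁/2) 1, by
      constructor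
      · exact le_min (by linarith [hx0.1]) zero_le_one
      · exact min_le_right _ _⟩ with hx₂def
    have hx₁le : x₁ ≤ x₀ := by
      rw [← Subtype.coe_le_coe]
      exact max_le (by linarith) hx0.1
    have hx₂ge : x₀ ≤ x₂ := by
      rw [← Subtype.coe_le_coe]
      exact le_min (by linarith) hx0.2
    have d₁ : dist x₁ x₀ < δ₁ := by
      rw [Subtype.dist_eq, Real.dist_eq, abs_sub_lt_iff]
      constructor
      · have : (x₁ : ℝ) ≤ x₀ := Subtype.coe_le_coe.mpr hx₁le
        linarith
      · have : (↑x₀ - δ₁/2 : ℝ) ≤ x₁ := le_max_left _ _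
        linarith
    have d₂ : dist x₂ x₀ < δ₁ := by
      rw [Subtype.dist_eq, Real.dist_eq, abs_sub_lt_iff]
      constructor
      · have : (x₂ : ℝ) ≤ ↑x₀ + δ₁/2 := min_le_left _ _
        linarith
      · have : (x₀ : ℝ) ≤ x₂ := Subtype.coe_le_coe.mpr hx₂ge
        linarith
    obtain ⟨δ₂, hδ₂, H₂⟩ := Metric.continuous_iff.mp (h x₁ y₀).1 y₀ (ε/3) (by linarith)
    obtain ⟨δ₃, hδ₃, H₃⟩ := Metric.continuous_iff.mp (h x₂ y₀).1 y₀ (ε/3) (by linarith)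
    refine ⟨min (δ₁/2) (min δ₂ δ₃), by positivity, ?_⟩
    rintro ⟨x, y⟩ hd
    rw [Prod.dist_eq] at hd
    rw [max_lt_iff] at hd
    obtain ⟨hdx, hdy⟩ := hd
    have hdx1 : dist x x₀ < δ₁/2 := lt_of_lt_of_le hdx (min_le_left _ _)
    have hdy2 : dist y y₀ < δ₂ :=
      lt_of_lt_of_le hdy (le_trans (min_le_right _ _) (min_le_left _ _))
    have hdy3 : dist y y₀ < δ₃ :=
      lt_of_lt_of_le hdy (le_trans (min_le_right _ _) (min_le_right _ _))
    have hxI := x.2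
    simp only [Set.mem_Icc] at hxI
    have hdxr : |(x : ℝ) - x₀| < δ₁/2 := by
      rw [Subtype.dist_eq, Real.dist_eq] at hdx1; exact hdx1
    rw [abs_sub_lt_iff] at hdxr
    have hx₁x : x₁ ≤ x := by
      rw [← Subtype.coe_le_coe]
      exact max_le (by linarith) hxI.1
    have hxx₂ : x ≤ x₂ := by
      rw [← Subtype.coe_le_coe]
      exact le_min (by linarith) hxI.2
    -- key estimates
    have e₁ : dist (T x₂ y₀) (T x₀ y₀) < ε/3 := H₁ x₂ d₂
    have e₂ : dist (T x₁ y₀) (T x₀ y₀) < ε/3 := H₁ x₁ d₁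
    have e₃ : dist (T x₁ y) (T x₁ y₀) < ε/3 := H₂ y hdy2
    have e₄ : dist (T x₂ y) (T x₂ y₀) < ε/3 := H₃ y hdy3
    have m₁ : T x₁ y ≤ T x y := hmono _ _ _ _ hx₁x le_rfl
    have m₂ : T x y ≤ T x₂ y := hmono _ _ _ _ hxx₂ le_rfl
    rw [Subtype.dist_eq, Real.dist_eq, abs_sub_lt_iff] at e₁ e₂ e₃ e₄ ⊢
    have c₁ : (T x₁ y : ℝ) ≤ T x y := Subtype.coe_le_coe.mpr m₁
    have c₂ : (T x y : ℝ) ≤ T x₂ y := Subtype.coe_le_coe.mpr m₂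
    constructor
    · -- T x y - T x₀ y₀ < ε
      have : (T x y : ℝ) ≤ T x₂ y := c₂
      obtain ⟨e₁a, e₁b⟩ := e₁
      obtain ⟨e₄a, e₄b⟩ := e₄
      linarith
    · obtain ⟨e₂a, e₂b⟩ := e₂
      obtain ⟨e₃a, e₃b⟩ := e₃
      linarith
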